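/- Let A and C be real symmetric positive semidefinite n×n matrices. Then there exists α > 0 with C ⪯ α·A if and only if A·A⁺·C = C, where A⁺ denotes the Moore–Penrose pseudoinverse of A. -/

import Mathlib

open Matrix

/-- `P` is the Moore–Penrose pseudoinverse of `A` (characterized by the four Penrose
equations, which determine it uniquely). -/
def IsMoorePenroseInverse {n : ℕ} (A P : Matrix (Fin n) (Fin n) ℝ) : Prop :=
  A * P * A = A ∧ P * A * P = P ∧ (A * P)ᵀ = A * P ∧ (P * A)ᵀ = P * A

private lemma dot_transpose_mulVec {n : ℕ} (M : Matrix (Fin n) (Fin n) ℝ)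
    (x v : Fin n → ℝ) : x ⬝ᵥ (Mᵀ *ᵥ v) = (M *ᵥ x) ⬝ᵥ v := by
  rw [dotProduct_mulVec, vecMul_transpose]

/-- Entrywise bound on a quadratic form. -/
private lemma quad_bound {n : ℕ} (M : Matrix (Fin n) (Fin n) ℝ) (y : Fin n → ℝ) :
    y ⬝ᵥ M *ᵥ y ≤ (∑ i, ∑ j, |M i j|) * (y ⬝ᵥ y) := by
  have hSnn : 0 ≤ y ⬝ᵥ y := by
    exact Finset.sum_nonneg fun k _ => mul_self_nonneg (y k)
  have hS : ∀ i j : Fin n, |y i| * |y j| ≤ y ⬝ᵥ y := by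
    intro i j
    have h1 : y i * y i ≤ y ⬝ᵥ y :=
      Finset.single_le_sum (fun k _ => mul_self_nonneg (y k)) (Finset.mem_univ i)
    have h2 : y j * y j ≤ y ⬝ᵥ y :=
      Finset.single_le_sum (fun k _ => mul_self_nonneg (y k)) (Finset.mem_univ j)
    nlinarith [sq_nonneg (|y i| - |y j|), abs_mul_abs_self (y i), abs_mul_abs_self (y j)]
  calc y ⬝ᵥ M *ᵥ y = ∑ i, ∑ j, y i * (M i j * y j) := by
        simp [dotProduct, mulVec, Finset.mul_sum]
    _ ≤ ∑ i, ∑ j, |M i j| * (y ⬝ᵥ y) := by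
        refine Finset.sum_le_sum fun i _ => Finset.sum_le_sum fun j _ => ?_
        calc y i * (M i j * y j) ≤ |y i * (M i j * y j)| := le_abs_self _
          _ = |M i j| * (|y i| * |y j|) := by rw [abs_mul, abs_mul]; ring
          _ ≤ |M i j| * (y ⬝ᵥ y) := by
              exact mul_le_mul_of_nonneg_left (hS i j) (abs_nonneg _)
    _ = (∑ i, ∑ j, |M i j|) * (y ⬝ᵥ y) := by
        simp [Finset.sum_mul]

/-- Cauchy–Schwarz for the semi-inner product induced by a PSD matrix. -/
private lemma psd_cauchy_schwarz {n : ℕ} {A : Matrix (Fin n) (Fin n) ℝ}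
    (hA : A.PosSemidef) (y z : Fin n → ℝ) :
    (y ⬝ᵥ A *ᵥ z) ^ 2 ≤ (y ⬝ᵥ A *ᵥ y) * (z ⬝ᵥ A *ᵥ z) := by
  have hAT : Aᵀ = A := by
    rw [← conjTranspose_eq_transpose_of_trivial]; exact hA.1
  have hsym : z ⬝ᵥ A *ᵥ y = y ⬝ᵥ A *ᵥ z := by
    rw [← hAT, dot_transpose_mulVec, dotProduct_comm, hAT]
  have hq : ∀ t : ℝ, 0 ≤ (z ⬝ᵥ A *ᵥ z) * (t * t) + 2 * (y ⬝ᵥ A *ᵥ z) * t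
      + (y ⬝ᵥ A *ᵥ y) := by
    intro t
    have h := hA.dotProduct_mulVec_nonneg (y + t • z)
    simp only [star_trivial, mulVec_add, mulVec_smul, add_dotProduct, dotProduct_add,
      smul_dotProduct, dotProduct_smul, smul_eq_mul, hsym] at h
    nlinarith
  have hd := discrim_le_zero hq
  unfold discrim at hd
  nlinarith

/-- Proposition A.4: for symmetric positive semidefinite `A` and `C`, there exists
`α > 0` with `C ⪯ α·A` if and only if `A·A⁺·C = C`. -/
theorem loewner_domination_iff_pseudoinverse
    (n : ℕ) (A C P : Matrix (Fin n) (Fin n) ℝ)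
    (hA : A.PosSemidef) (hC : C.PosSemidef)
    (hP : IsMoorePenroseInverse A P) :
    (∃ α : ℝ, 0 < α ∧ (α • A - C).PosSemidef) ↔ A * P * C = C := by
  obtain ⟨hP1, hP2, hP3, hP4⟩ := hP
  set Q : Matrix (Fin n) (Fin n) ℝ := A * P with hQ
  have hAT : Aᵀ = A := by
    rw [← conjTranspose_eq_transpose_of_trivial]; exact hA.1
  have hCT : Cᵀ = C := by
    rw [← conjTranspose_eq_transpose_of_trivial]; exact hC.1
  have hQT : Qᵀ = Q := hP3
  have hQA : Q * A = A := hP1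
  have hAQ : A * Q = A := by
    have := congrArg Matrix.transpose hQA
    rwa [transpose_mul, hQT, hAT] at this
  have hQQ : Q * Q = Q := by
    calc Q * Q = (Q * A) * P := by rw [hQ]; noncomm_ring
      _ = Q := by rw [hQA]
  constructor
  · rintro ⟨α, hα, hD⟩
    -- show C * (1 - Q) = 0, i.e. C vanishes on the kernel part
    have hAR : A * (1 - Q) = 0 := by rw [mul_sub, mul_one, hAQ, sub_self]
    have hCR : ∀ x : Fin n → ℝ, C *ᵥ ((1 - Q) *ᵥ x) = 0 := by
      intro x
      set y : Fin n → ℝ := (1 - Q) *ᵥ x with hy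
      have hAy : A *ᵥ y = 0 := by
        rw [hy, mulVec_mulVec, hAR, zero_mulVec]
      have hyC0 : y ⬝ᵥ C *ᵥ y = 0 := by
        have h1 : 0 ≤ y ⬝ᵥ C *ᵥ y := by simpa using hC.dotProduct_mulVec_nonneg y
        have h2 : 0 ≤ y ⬝ᵥ (α • A - C) *ᵥ y := by simpa using hD.dotProduct_mulVec_nonneg y
        rw [sub_mulVec, dotProduct_sub, smul_mulVec, dotProduct_smul, hAy,
          dotProduct_zero, smul_zero, zero_sub] at h2
        linarith
      have := (hC.dotProduct_mulVec_zero_iff y).mp (by simpa using hyC0)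
      exact this
    have hCRm : C * (1 - Q) = 0 := by
      ext i j
      have := congrFun (hCR (Pi.single j 1)) i
      rwa [mulVec_mulVec, mulVec_single_one] at this
    have hCQ : C * Q = C := by
      have : C - C * Q = 0 := by rw [← hCRm]; noncomm_ring
      linear_combination (norm := noncomm_ring) -this
    -- transpose to get Q * C = C
    have := congrArg Matrix.transpose hCQ
    rwa [transpose_mul, hQT, hCT] at this
  · intro h
    have hQC : Q * C = C := h
    have hCQ : C * Q = C := by
      have := congrArg Matrix.transpose hQC
      rwa [transpose_mul, hQT, hCT] at this
    obtain ⟨M, hM⟩ : ∃ M : Matrix (Fin n) (Fin n) ℝ, M = Pᵀ * (A * P) := ⟨_, rfl⟩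
    obtain ⟨K, hK⟩ : ∃ K : ℝ, K = ∑ i, ∑ j, |C i j| := ⟨_, rfl⟩
    obtain ⟨β, hβ⟩ : ∃ β : ℝ, β = ∑ i, ∑ j, |M i j| := ⟨_, rfl⟩
    have hKnn : 0 ≤ K := hK ▸ (Finset.sum_nonneg fun i _ =>
      Finset.sum_nonneg fun j _ => abs_nonneg _)
    have hβnn : 0 ≤ β := hβ ▸ (Finset.sum_nonneg fun i _ =>
      Finset.sum_nonneg fun j _ => abs_nonneg _)
    refine ⟨K * β + 1, by positivity, posSemidef_iff_dotProduct_mulVec.mpr ⟨?_, ?_⟩⟩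
    · -- Hermitian
      have h1 : ((K * β + 1) • A - C)ᵀ = (K * β + 1) • A - C := by
        rw [transpose_sub, transpose_smul, hAT, hCT]
      rw [IsHermitian, conjTranspose_eq_transpose_of_trivial, h1]
    · intro x
      obtain ⟨y, hy⟩ : ∃ v : Fin n → ℝ, v = Q *ᵥ x := ⟨_, rfl⟩
      have hQy : Q *ᵥ y = y := by rw [hy, mulVec_mulVec, hQQ]
      have hxCx : x ⬝ᵥ C *ᵥ x = y ⬝ᵥ C *ᵥ y := by
        rw [hy, mulVec_mulVec, hCQ, ← dot_transpose_mulVec, hQT, mulVec_mulVec, hQC]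
      have hxAx : x ⬝ᵥ A *ᵥ x = y ⬝ᵥ A *ᵥ y := by
        rw [hy, mulVec_mulVec, hAQ, ← dot_transpose_mulVec, hQT, mulVec_mulVec, hQA]
      obtain ⟨z, hz⟩ : ∃ v : Fin n → ℝ, v = P *ᵥ y := ⟨_, rfl⟩
      have hS0 : y ⬝ᵥ y = y ⬝ᵥ A *ᵥ z := by
        rw [hz, mulVec_mulVec, ← hQ, hQy]
      have hzAz : z ⬝ᵥ A *ᵥ z = y ⬝ᵥ M *ᵥ y := by
        rw [hz, mulVec_mulVec, ← dot_transpose_mulVec, mulVec_mulVec, ← hM]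
      have hCS : (y ⬝ᵥ y) ^ 2 ≤ (y ⬝ᵥ A *ᵥ y) * (z ⬝ᵥ A *ᵥ z) := by
        rw [hS0]; exact psd_cauchy_schwarz hA y z
      have hzb : z ⬝ᵥ A *ᵥ z ≤ β * (y ⬝ᵥ y) := by
        rw [hzAz, hβ]; exact quad_bound M y
      have hyC : y ⬝ᵥ C *ᵥ y ≤ K * (y ⬝ᵥ y) := hK ▸ quad_bound C y
      have hyA : 0 ≤ y ⬝ᵥ A *ᵥ y := by simpa using hA.dotProduct_mulVec_nonneg y
      have hyy : 0 ≤ y ⬝ᵥ y := Finset.sum_nonneg fun k _ => mul_self_nonneg (y k)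
      -- final inequality
      have goal : y ⬝ᵥ C *ᵥ y ≤ (K * β + 1) * (y ⬝ᵥ A *ᵥ y) := by
        rcases eq_or_lt_of_le hyy with h0 | h0
        · have h1 : y ⬝ᵥ C *ᵥ y ≤ 0 := by rw [← h0] at hyC; linarith
          have h2 : (0:ℝ) ≤ (K * β + 1) * (y ⬝ᵥ A *ᵥ y) :=
            mul_nonneg (by positivity) hyA
          linarith
        · have hle : y ⬝ᵥ y ≤ β * (y ⬝ᵥ A *ᵥ y) := by
            have h1 : (y ⬝ᵥ y) * (y ⬝ᵥ y) ≤ (β * (y ⬝ᵥ A *ᵥ y)) * (y ⬝ᵥ y) := by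
              have := mul_le_mul_of_nonneg_left hzb hyA
              nlinarith
            exact le_of_mul_le_mul_right h1 h0
          have h2 : K * (y ⬝ᵥ y) ≤ K * (β * (y ⬝ᵥ A *ᵥ y)) :=
            mul_le_mul_of_nonneg_left hle hKnn
          nlinarith
      have : x ⬝ᵥ ((K * β + 1) • A - C) *ᵥ x =
          (K * β + 1) * (x ⬝ᵥ A *ᵥ x) - x ⬝ᵥ C *ᵥ x := by
        rw [sub_mulVec, dotProduct_sub, smul_mulVec, dotProduct_smul]
        rfl
      simp only [star_trivial]
      rw [this, hxCx, hxAx]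
      linarith
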